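/- Let z_1, z_2, …, z_n ∈ ℂ and H > 0. Then there exist an integer l with 1 ≤ l ≤ n, points u_1, …, u_l ∈ ℂ and radii s_1, …, s_l > 0 with Σ_{k=1}^{l} s_k² ≤ 4H², such that Σ_{k=1}^{n} 1/|z − z_k| ≤ 2n/H for every z ∈ ℂ that lies outside ∪_{k=1}^{l} D(u_k, s_k). -/

import Mathlib

open Metric Set Finset


-- Σ_{p=1}^n 1/√p ≤ 2√n
lemma sum_one_div_sqrt_le (n : ℕ) :
    ∑ p ∈ Finset.range n, 1 / Real.sqrt (p + 1) ≤ 2 * Real.sqrt n := by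
  induction n with
  | zero => simp
  | succ m ih =>
    rw [Finset.sum_range_succ]
    have h1 : (0:ℝ) < Real.sqrt ((m:ℝ)+1) := by positivity
    have hm : Real.sqrt m ≤ Real.sqrt ((m:ℝ)+1) := by
      apply Real.sqrt_le_sqrt; linarith
    have key : 1 / Real.sqrt ((m:ℝ)+1) ≤ 2 * Real.sqrt ((m:ℝ)+1) - 2 * Real.sqrt m := by
      rw [div_le_iff₀ h1]
      have e : (2 * Real.sqrt ((m:ℝ)+1) - 2 * Real.sqrt m) * Real.sqrt ((m:ℝ)+1)
          = 2 * ((m:ℝ)+1) - 2 * (Real.sqrt m * Real.sqrt ((m:ℝ)+1)) := by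
        rw [sub_mul, mul_assoc 2 (Real.sqrt ((m:ℝ)+1)), Real.mul_self_sqrt (by positivity)]
        ring
      rw [e]
      have h2 : Real.sqrt m * Real.sqrt m = (m:ℝ) := Real.mul_self_sqrt (by positivity)
      have h3 : Real.sqrt ((m:ℝ)+1) * Real.sqrt ((m:ℝ)+1) = (m:ℝ)+1 :=
        Real.mul_self_sqrt (by positivity)
      nlinarith [sq_nonneg (Real.sqrt ((m:ℝ)+1) - Real.sqrt m)]
    push_cast
    linarith

-- sorting lemma
lemma sorted_bound {n : ℕ} (d : Fin n → ℝ) (μ : ℕ → ℝ) (hμpos : ∀ p, 1 ≤ p → 0 < μ p)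
    (hcount : ∀ p, 1 ≤ p → ((Finset.univ.filter (fun k => d k < μ p)).card < p)) :
    ∑ k, 1 / d k ≤ ∑ p ∈ Finset.range n, 1 / μ (p + 1) := by
  classical
  set σ := Tuple.sort d with hσ
  have hsum : ∑ k, 1 / d k = ∑ p : Fin n, 1 / d (σ p) :=
    (Equiv.sum_comp σ (fun k => 1 / d k)).symm
  rw [hsum, (Fin.sum_univ_eq_sum_range (fun p => 1 / μ (p+1)) n).symm]
  apply Finset.sum_le_sum
  intro p _
  have hμp : 0 < μ ((p:ℕ)+1) := hμpos _ (by omega)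
  have hkey : μ ((p:ℕ)+1) ≤ d (σ p) := by
    by_contra hd
    push_neg at hd
    have hsub : (Finset.Iic p).image σ ⊆ Finset.univ.filter (fun k => d k < μ ((p:ℕ)+1)) := by
      intro x hx
      rcases Finset.mem_image.1 hx with ⟨q, hq, rfl⟩
      have hmono : d (σ q) ≤ d (σ p) := Tuple.monotone_sort d (Finset.mem_Iic.1 hq)
      exact Finset.mem_filter.2 ⟨Finset.mem_univ _, lt_of_le_of_lt hmono hd⟩
    have hcard : ((Finset.Iic p).image σ).card = (p:ℕ) + 1 := by
      rw [Finset.card_image_of_injective _ σ.injective, Fin.card_Iic]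
    have := Finset.card_le_card hsub
    rw [hcard] at this
    have := hcount ((p:ℕ)+1) (by omega)
    omega
  exact one_div_le_one_div_of_le hμp hkey



lemma list_len_le_sum : ∀ (L : List ℕ), (∀ x ∈ L, 1 ≤ x) → L.length ≤ L.sum := by
  intro L
  induction L with
  | nil => simp
  | cons a t ih =>
    intro h
    simp only [List.length_cons, List.sum_cons]
    have := ih (fun x hx => h x (List.mem_cons_of_mem a hx))
    have := h a List.mem_cons_self
    omega

lemma greedy {n : ℕ} (z : Fin n → ℂ) (lam : ℕ → ℝ)
    (hlam1 : 0 < lam 1) (hmono : Monotone lam) :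
    ∀ S : Finset (Fin n), ∃ L : List (ℂ × ℕ),
      (S.Nonempty → L ≠ []) ∧
      (∀ pr ∈ L, 1 ≤ pr.2) ∧
      ((L.map Prod.snd).sum ≤ S.card) ∧
      ∀ w : ℂ, (∀ pr ∈ L, 2 * lam pr.2 ≤ dist w pr.1) →
        ∀ p : ℕ, 1 ≤ p → (S.filter (fun k => dist w (z k) < lam p)).card < p := by
  intro S
  induction S using Finset.strongInduction with
  | _ S ih =>
  by_cases hS : S.Nonempty
  · -- greedy step
    set P : Set ℕ :=
      {p | 1 ≤ p ∧ ∃ c : ℂ, p ≤ (S.filter (fun k => dist c (z k) < lam p)).card} with hP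
    obtain ⟨k₀, hk₀⟩ := hS
    have hPne : P.Nonempty := by
      refine ⟨1, le_refl 1, z k₀, ?_⟩
      have : k₀ ∈ S.filter (fun k => dist (z k₀) (z k) < lam 1) :=
        Finset.mem_filter.2 ⟨hk₀, by simpa using hlam1⟩
      exact Finset.card_pos.2 ⟨k₀, this⟩
    have hPbdd : BddAbove P := by
      refine ⟨S.card, fun p hp => ?_⟩
      obtain ⟨_, c, hc⟩ := hp
      exact le_trans hc (Finset.card_filter_le _ _)
    set p₁ := sSup P with hp₁def
    have hp₁P : p₁ ∈ P := Nat.sSup_mem hPne hPbdd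
    obtain ⟨hp₁1, c₁, hc₁⟩ := hp₁P
    set R := S.filter (fun k => dist c₁ (z k) < lam p₁) with hR
    have hRS : R ⊆ S := Finset.filter_subset _ _
    have hRne : R.Nonempty := Finset.card_pos.1 (lt_of_lt_of_le hp₁1 hc₁)
    set T := S \ R with hT
    have hTS : T ⊂ S := Finset.sdiff_ssubset hRS hRne
    obtain ⟨L', hL'ne, hL'mem, hL'sum, hL'key⟩ := ih T hTS
    refine ⟨(c₁, p₁) :: L', fun _ => List.cons_ne_nil _ _, ?_, ?_, ?_⟩
    · intro pr hpr
      rcases List.mem_cons.1 hpr with h | h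
      · subst h; exact hp₁1
      · exact hL'mem pr h
    · simp only [List.map_cons, List.sum_cons]
      have hTcard : T.card = S.card - R.card := Finset.card_sdiff_of_subset hRS
      have hRcard : R.card ≤ S.card := Finset.card_le_card hRS
      omega
    · intro w hw p hp1
      have hw1 : 2 * lam p₁ ≤ dist w c₁ := hw _ List.mem_cons_self
      have hwL' : ∀ pr ∈ L', 2 * lam pr.2 ≤ dist w pr.1 :=
        fun pr h => hw pr (List.mem_cons_of_mem _ h)
      by_cases hpp : p ≤ p₁
      · have hfil : S.filter (fun k => dist w (z k) < lam p)
            = T.filter (fun k => dist w (z k) < lam p) := by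
          ext k
          simp only [Finset.mem_filter, hT, Finset.mem_sdiff]
          constructor
          · rintro ⟨hkS, hkd⟩
            refine ⟨⟨hkS, fun hkR => ?_⟩, hkd⟩
            have h1 : dist c₁ (z k) < lam p₁ := (Finset.mem_filter.1 hkR).2
            have h2 : dist w (z k) < lam p₁ := lt_of_lt_of_le hkd (hmono hpp)
            have : dist w c₁ < 2 * lam p₁ := by
              calc dist w c₁ ≤ dist w (z k) + dist (z k) c₁ := dist_triangle _ _ _
                _ = dist w (z k) + dist c₁ (z k) := by rw [dist_comm (z k) c₁]
                _ < 2 * lam p₁ := by linarith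
            linarith
          · rintro ⟨⟨hkS, _⟩, hkd⟩
            exact ⟨hkS, hkd⟩
        rw [hfil]
        exact hL'key w hwL' p hp1
      · push_neg at hpp
        have hpnotP : p ∉ P := fun h => absurd (le_csSup hPbdd h) (not_le.2 hpp)
        rw [hP] at hpnotP
        simp only [Set.mem_setOf_eq, not_and, not_exists, not_le] at hpnotP
        exact hpnotP hp1 w
  · -- empty case
    rw [Finset.not_nonempty_iff_eq_empty] at hS
    subst hS
    exact ⟨[], fun h => absurd h Finset.not_nonempty_empty,
      by simp, by simp, fun w _ p hp => by simp; omega⟩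


/-- The Fuchs–Macintyre lemma, part (i): given `z₁,…,zₙ ∈ ℂ` and `H > 0` there are at
most `n` exceptional disks `D(u_k, s_k)` with `Σ s_k² ≤ 4H²` outside of which
`Σ_{k=1}^n 1/|z − z_k| ≤ 2n/H`. -/
theorem fuchs_macintyre (n : ℕ) (hn : 0 < n) (z : Fin n → ℂ) (H : ℝ) (hH : 0 < H) :
    ∃ l : ℕ, 1 ≤ l ∧ l ≤ n ∧
      ∃ u : Fin l → ℂ, ∃ s : Fin l → ℝ, (∀ k, 0 < s k) ∧
        (∑ k, (s k) ^ 2) ≤ 4 * H ^ 2 ∧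
        ∀ w : ℂ, w ∉ (⋃ k, ball (u k) (s k)) →
          (∑ k, 1 / ‖w - z k‖) ≤ 2 * n / H := by
  have hn0 : (0:ℝ) < n := by exact_mod_cast hn
  have hsn : (0:ℝ) < Real.sqrt n := Real.sqrt_pos.2 hn0
  set lam : ℕ → ℝ := fun p => H * Real.sqrt p / Real.sqrt n with hlamdef
  have hlam1 : 0 < lam 1 := by
    simp only [hlamdef, Nat.cast_one, Real.sqrt_one, mul_one]
    positivity
  have hmono : Monotone lam := by
    intro p q hpq
    simp only [hlamdef]
    gcongr H * ?_ / √(n:ℝ)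
    exact Real.sqrt_le_sqrt (by exact_mod_cast hpq)
  have hlampos : ∀ p, 1 ≤ p → 0 < lam p := fun p hp => lt_of_lt_of_le hlam1 (hmono hp)
  have hlamsq : ∀ p : ℕ, lam p ^ 2 = H ^ 2 * p / n := by
    intro p
    rw [hlamdef]
    rw [div_pow, mul_pow, Real.sq_sqrt (by positivity : (0:ℝ) ≤ (p:ℝ)),
      Real.sq_sqrt hn0.le]
  obtain ⟨L, hLne, hLmem, hLsum, hLkey⟩ := greedy z lam hlam1 hmono Finset.univ
  have hune : (Finset.univ : Finset (Fin n)).Nonempty := by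
    have : Nonempty (Fin n) := Fin.pos_iff_nonempty.mp hn
    exact Finset.univ_nonempty
  have hL : L ≠ [] := hLne hune
  refine ⟨L.length, ?_, ?_, fun k => (L.get k).1, fun k => 2 * lam (L.get k).2, ?_, ?_, ?_⟩
  · exact List.length_pos_iff.2 hL
  · calc L.length = (L.map Prod.snd).length := (List.length_map _).symm
      _ ≤ (L.map Prod.snd).sum := list_len_le_sum _ (by
          intro x hx
          rcases List.mem_map.1 hx with ⟨pr, hpr, rfl⟩
          exact hLmem pr hpr)
      _ ≤ Finset.univ.card := hLsum
      _ = n := by simp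
  · intro k
    have h1 : L.get k ∈ L := by
      have := List.get_mem L k
      simpa using this
    have h2 : 1 ≤ (L.get k).2 := hLmem _ h1
    have := hlampos _ h2
    show 0 < 2 * lam (L.get k).2
    linarith
  · -- sum of squares
    have hsum : ∑ k : Fin L.length, (2 * lam (L.get k).2) ^ 2
        = (4 * H ^ 2 / n) * ∑ k : Fin L.length, ((L.get k).2 : ℝ) := by
      rw [Finset.mul_sum]
      apply Finset.sum_congr rfl
      intro k _
      rw [mul_pow, hlamsq]
      ring
    have hsum2 : ∑ k : Fin L.length, ((L.get k).2 : ℝ) ≤ (n : ℝ) := by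
      have e1 : ∑ k : Fin L.length, ((L.get k).2 : ℝ)
          = (L.map (fun pr => ((pr.2 : ℕ) : ℝ))).sum := by
        rw [← Fin.sum_univ_fun_getElem L (fun pr => ((pr.2 : ℕ) : ℝ))]
        apply Finset.sum_congr rfl
        intro k _
        simp [List.get_eq_getElem]
      have e2 : (L.map (fun pr => ((pr.2 : ℕ) : ℝ))).sum
          = (((L.map Prod.snd).sum : ℕ) : ℝ) := by
        rw [Nat.cast_list_sum, List.map_map]
        rfl
      rw [e1, e2]
      have : (L.map Prod.snd).sum ≤ n := by
        refine le_trans hLsum ?_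
        simp
      exact_mod_cast this
    rw [hsum]
    calc (4 * H ^ 2 / n) * ∑ k : Fin L.length, ((L.get k).2 : ℝ)
        ≤ (4 * H ^ 2 / n) * n := by
          apply mul_le_mul_of_nonneg_left hsum2 (by positivity)
      _ = 4 * H ^ 2 := by field_simp
  · -- main estimate
    intro w hw
    have hw' : ∀ pr ∈ L, 2 * lam pr.2 ≤ dist w pr.1 := by
      intro pr hpr
      rcases List.mem_iff_get.1 hpr with ⟨k, rfl⟩
      have : w ∉ ball (L.get k).1 (2 * lam (L.get k).2) := by
        intro hmem
        exact hw (Set.mem_iUnion.2 ⟨k, hmem⟩)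
      simpa [Metric.mem_ball, not_lt] using this
    have hcount := hLkey w hw'
    have hcount' : ∀ p, 1 ≤ p →
        ((Finset.univ.filter (fun k => ‖w - z k‖ < lam p)).card < p) := by
      intro p hp
      have := hcount p hp
      simpa [Complex.dist_eq] using this
    have := sorted_bound (fun k => ‖w - z k‖) lam hlampos hcount'
    refine le_trans this ?_
    have : ∑ p ∈ Finset.range n, 1 / lam (p + 1)
        = (Real.sqrt n / H) * ∑ p ∈ Finset.range n, 1 / Real.sqrt ((p:ℝ) + 1) := by
      rw [Finset.mul_sum]
      apply Finset.sum_congr rfl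
      intro p _
      rw [hlamdef]
      have h1 : (0:ℝ) < Real.sqrt ((p:ℝ)+1) := by positivity
      push_cast
      field_simp
    rw [this]
    calc (Real.sqrt n / H) * ∑ p ∈ Finset.range n, 1 / Real.sqrt ((p:ℝ) + 1)
        ≤ (Real.sqrt n / H) * (2 * Real.sqrt n) := by
          apply mul_le_mul_of_nonneg_left (sum_one_div_sqrt_le n) (by positivity)
      _ = 2 * n / H := by
          rw [div_mul_eq_mul_div]
          congr 1
          rw [mul_comm (Real.sqrt (n:ℝ)) (2 * Real.sqrt (n:ℝ)), mul_assoc,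
            Real.mul_self_sqrt hn0.le]
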